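/- Let N ≥ 1 and let (Γ₁, Γ₂) be a pair of N×N complex matrices representing a true 2×N×N entangled state. Set n = r_max(Γ₁,Γ₂) and l = r_min(Γ₁,Γ₂), and suppose n < N. Then 2(N − n) ≤ l ≤ n. -/

import Mathlib

open Matrix

/-- Maximum rank of the pencil `α • Γ₁ + β • Γ₂` over `(α, β) ≠ (0, 0)`. -/
noncomputable def rmax {N : ℕ} (Γ₁ Γ₂ : Matrix (Fin N) (Fin N) ℂ) : ℕ :=
  sSup {r : ℕ | ∃ α β : ℂ, ¬(α = 0 ∧ β = 0) ∧ (α • Γ₁ + β • Γ₂).rank = r}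

/-- Minimum rank of the pencil `α • Γ₁ + β • Γ₂` over `(α, β) ≠ (0, 0)`. -/
noncomputable def rmin {N : ℕ} (Γ₁ Γ₂ : Matrix (Fin N) (Fin N) ℂ) : ℕ :=
  sInf {r : ℕ | ∃ α β : ℂ, ¬(α = 0 ∧ β = 0) ∧ (α • Γ₁ + β • Γ₂).rank = r}

/-- A pair `(Γ₁, Γ₂)` of `N × N` complex matrices represents a true `2 × N × N`
entangled state. -/
def TrueEntangled {N : ℕ} (Γ₁ Γ₂ : Matrix (Fin N) (Fin N) ℂ) : Prop :=
  LinearIndependent ℂ ![Γ₁, Γ₂] ∧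
  (Matrix.fromRows Γ₁ Γ₂).rank = N ∧
  (Matrix.fromCols Γ₁ Γ₂).rank = N



open Matrix Polynomial Module Submodule

section RankHelpers

variable {K : Type*} [Field K]

/-- selection identity: submatrix as product -/
lemma submatrix_eq_one_mul_mul {N N' k k' : ℕ} (M : Matrix (Fin N) (Fin N') K)
    (f : Fin k → Fin N) (g : Fin k' → Fin N') :
    M.submatrix f g =
      ((1 : Matrix (Fin N) (Fin N) K).submatrix f id) * M *
        ((1 : Matrix (Fin N') (Fin N') K).submatrix id g) := by
  ext i j
  rw [Matrix.mul_apply]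
  simp only [Matrix.mul_apply, Matrix.submatrix_apply, id_eq, Matrix.one_apply]
  simp only [ite_mul, one_mul, zero_mul, Finset.sum_ite_eq, Finset.mem_univ, if_true]
  simp [mul_ite, Finset.sum_ite_eq]

lemma rank_submatrix_le' {N N' k k' : ℕ} (M : Matrix (Fin N) (Fin N') K)
    (f : Fin k → Fin N) (g : Fin k' → Fin N') :
    (M.submatrix f g).rank ≤ M.rank := by
  rw [submatrix_eq_one_mul_mul]
  refine le_trans (le_trans (Matrix.rank_mul_le _ _) inf_le_left) ?_
  exact le_trans (Matrix.rank_mul_le _ _) inf_le_right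

lemma rank_ge_of_submatrix_det_ne_zero {N N' k : ℕ} (M : Matrix (Fin N) (Fin N') K)
    (f : Fin k → Fin N) (g : Fin k → Fin N')
    (hdet : (M.submatrix f g).det ≠ 0) : k ≤ M.rank := by
  have h1 : (M.submatrix f g).rank = k := by
    rw [Matrix.rank_of_isUnit _ ((Matrix.isUnit_iff_isUnit_det _).2 hdet.isUnit)]
    simp
  calc k = (M.submatrix f g).rank := h1.symm
    _ ≤ M.rank := rank_submatrix_le' M f g

/-- From a family with span of finrank ≥ k, extract k indices giving an independent subfamily. -/
lemma exists_subfamily_linearIndependent {ι : Type*} [Fintype ι]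
    {V : Type*} [AddCommGroup V] [Module K V]
    (v : ι → V) {k : ℕ} (hk : k ≤ finrank K (span K (Set.range v))) :
    ∃ g : Fin k → ι, LinearIndependent K (v ∘ g) := by
  obtain ⟨b, hbsub, hbspan, hbind⟩ := exists_linearIndependent K (Set.range v)
  have hbfin : b.Finite := (Set.finite_range v).subset hbsub
  haveI : Fintype ↥b := hbfin.fintype
  classical
  have hcard : finrank K (span K b) = Fintype.card ↥b := by
    rw [finrank_span_set_eq_card hbind, Set.toFinset_card]
  rw [← hbspan, hcard] at hk
  let e : ↥b ≃ Fin (Fintype.card ↥b) := Fintype.equivFin ↥b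
  let j : Fin k → ↥b := fun i => e.symm (Fin.castLE hk i)
  have hjinj : Function.Injective j := by
    intro a b hab
    exact Fin.castLE_injective hk (e.symm.injective hab)
  have hf1ind : LinearIndependent K (fun i => ((j i : V))) := hbind.comp j hjinj
  have hmem : ∀ i, ((j i : V)) ∈ Set.range v := fun i => hbsub (j i).2
  refine ⟨fun i => Classical.choose (hmem i), ?_⟩
  have : (v ∘ fun i => Classical.choose (hmem i)) = fun i => ((j i : V)) := by
    funext i
    exact Classical.choose_spec (hmem i)
  rw [this]
  exact hf1ind

/-- A matrix of rank ≥ k has a k×k submatrix with nonzero determinant. -/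
lemma exists_submatrix_det_ne_zero {N N' k : ℕ} (M : Matrix (Fin N) (Fin N') K)
    (hk : k ≤ M.rank) :
    ∃ (f : Fin k → Fin N) (g : Fin k → Fin N'), (M.submatrix f g).det ≠ 0 := by
  classical
  -- choose k independent columns
  rw [Matrix.rank_eq_finrank_span_cols] at hk
  obtain ⟨g, hg⟩ := exists_subfamily_linearIndependent Mᵀ hk
  -- M' = selected columns
  set M' : Matrix (Fin N) (Fin k) K := M.submatrix id g with hM'
  have hM't : M'ᵀ = Mᵀ ∘ g := by
    funext a b; rfl
  have hrank' : M'.rank = k := by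
    rw [← Matrix.rank_transpose, hM't]
    have := hg.rank_matrix (M := Matrix.of (Mᵀ ∘ g))
    have h' : (Matrix.of (Mᵀ ∘ g)).rank = k := by simpa using this
    exact h'
  -- choose k independent rows of M'
  have hk2 : k ≤ finrank K (span K (Set.range M')) := by
    exact le_of_eq (hrank'.symm.trans (Matrix.rank_eq_finrank_span_row M'))
  obtain ⟨f, hf⟩ := exists_subfamily_linearIndependent (M' : Fin N → Fin k → K) hk2
  refine ⟨f, g, ?_⟩
  have hsq : M.submatrix f g = Matrix.of (M' ∘ f) := by
    funext a b; rfl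
  rw [hsq]
  intro hdet
  obtain ⟨w, hw0, hwmul⟩ := Matrix.exists_vecMul_eq_zero_iff.2 hdet
  apply hw0
  funext i
  refine Fintype.linearIndependent_iff.1 hf w ?_ i
  funext j
  have h2 := congrFun hwmul j
  simpa [Matrix.vecMul, dotProduct, Finset.sum_apply] using h2

end RankHelpers



open Matrix Polynomial Module Submodule

section Frobenius

variable {K : Type*} [Field K]

lemma finrank_map_add_finrank_inf_ker {V W : Type*} [AddCommGroup V] [Module K V]
    [AddCommGroup W] [Module K W] [FiniteDimensional K V]
    (g : V →ₗ[K] W) (q : Submodule K V) :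
    finrank K (q.map g) + finrank K (q ⊓ LinearMap.ker g : Submodule K V) = finrank K q := by
  have h := LinearMap.finrank_range_add_finrank_ker (g.domRestrict q)
  rw [LinearMap.range_domRestrict, LinearMap.ker_domRestrict] at h
  rw [← h]
  congr 1
  have heq : Submodule.comap q.subtype (LinearMap.ker g) =
      Submodule.comap q.subtype (q ⊓ LinearMap.ker g) := by
    ext x
    simp [x.2]
  rw [heq]
  exact (Submodule.comapSubtypeEquivOfLe inf_le_left).finrank_eq.symm

/-- Frobenius rank inequality. -/
lemma frobenius_rank_ineq {a N N' b : ℕ} (G : Matrix (Fin a) (Fin N) K)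
    (A : Matrix (Fin N) (Fin N') K) (H : Matrix (Fin N') (Fin b) K) :
    (G * A).rank + (A * H).rank ≤ (G * (A * H)).rank + A.rank := by
  classical
  have hq : LinearMap.range (A * H).mulVecLin ≤ LinearMap.range A.mulVecLin := by
    rw [Matrix.mulVecLin_mul]
    exact LinearMap.range_comp_le_range _ _
  set g := G.mulVecLin
  set q : Submodule K (Fin N → K) := LinearMap.range (A * H).mulVecLin
  set q' : Submodule K (Fin N → K) := LinearMap.range A.mulVecLin
  have hGA : (G * A).rank = finrank K (q'.map g) := by
    rw [Matrix.rank, Matrix.mulVecLin_mul, LinearMap.range_comp]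
  have hGAH : (G * (A * H)).rank = finrank K (q.map g) := by
    rw [Matrix.rank, Matrix.mulVecLin_mul, LinearMap.range_comp]
  have h1 := finrank_map_add_finrank_inf_ker g q
  have h2 := finrank_map_add_finrank_inf_ker g q'
  have hmono : finrank K (q ⊓ LinearMap.ker g : Submodule K (Fin N → K)) ≤
      finrank K (q' ⊓ LinearMap.ker g : Submodule K (Fin N → K)) :=
    Submodule.finrank_mono (inf_le_inf_right _ hq)
  have hAH : (A * H).rank = finrank K q := rfl
  have hA : A.rank = finrank K q' := rfl
  omega

end Frobenius



open Matrix Polynomial Module Submodule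

noncomputable section Spec

abbrev Rp : Type := Polynomial ℂ
abbrev Fp : Type := FractionRing (Polynomial ℂ)

abbrev φp : Rp →+* Fp := algebraMap Rp Fp

lemma exists_eval_rank_ge {N N' : ℕ} (P : Matrix (Fin N) (Fin N') Rp) :
    ∃ t₀ : ℂ, (P.map φp).rank ≤ (P.map (evalRingHom t₀)).rank := by
  classical
  obtain ⟨f, g, hdet⟩ := exists_submatrix_det_ne_zero (P.map φp) le_rfl
  rw [Matrix.submatrix_map] at hdet
  have hq : (P.submatrix f g).det ≠ 0 := by
    intro h0
    apply hdet
    have := (RingHom.map_det φp (P.submatrix f g)).symm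
    rw [RingHom.mapMatrix_apply] at this
    rw [this, h0, map_zero]
  obtain ⟨t₀, ht₀⟩ : ∃ t₀ : ℂ, ¬ (P.submatrix f g).det.IsRoot t₀ := by
    have hfin := Polynomial.finite_setOf_isRoot hq
    obtain ⟨t₀, ht₀⟩ := hfin.infinite_compl.nonempty
    exact ⟨t₀, ht₀⟩
  refine ⟨t₀, ?_⟩
  apply rank_ge_of_submatrix_det_ne_zero (P.map (evalRingHom t₀)) f g
  rw [Matrix.submatrix_map]
  have := RingHom.map_det (evalRingHom t₀) (P.submatrix f g)
  rw [RingHom.mapMatrix_apply] at this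
  rw [this.symm]
  exact ht₀

/-- columns independent implies rank equals number of columns -/
lemma rank_eq_of_cols_linearIndependent {K : Type*} [Field K] {N p : ℕ}
    {M : Matrix (Fin N) (Fin p) K} (h : LinearIndependent K Mᵀ) : M.rank = p := by
  rw [← Matrix.rank_transpose]; exact h.rank_matrix.trans (Fintype.card_fin _)

end Spec



open Matrix Polynomial Module Submodule

set_option maxHeartbeats 1000000

noncomputable section Fixup

/-- max natDegree over coordinates of a polynomial vector -/
def dvP {N : ℕ} (x : Fin N → Rp) : ℕ := Finset.univ.sup fun j => (x j).natDegree

lemma fixstep {N p : ℕ} (P : Matrix (Fin N) (Fin N) Rp)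
    (v : Fin p → Fin N → Rp)
    (hker : ∀ k, P.mulVec (v k) = 0)
    (hind : LinearIndependent Fp (fun k => ⇑φp ∘ v k))
    (hdep : ¬ LinearIndependent ℂ (fun k j => (v k j).coeff 0)) :
    ∃ w : Fin p → Fin N → Rp,
      (∀ k, P.mulVec (w k) = 0) ∧
      LinearIndependent Fp (fun k => ⇑φp ∘ w k) ∧
      ∑ k, dvP (w k) < ∑ k, dvP (v k) := by
  classical
  obtain ⟨c, hc0, hcex⟩ := Fintype.not_linearIndependent_iff.1 hdep
  set s : Finset (Fin p) := Finset.univ.filter (fun k => c k ≠ 0) with hs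
  have hsne : s.Nonempty := by
    obtain ⟨i, hi⟩ := hcex
    exact ⟨i, by simp [hs, hi]⟩
  obtain ⟨j, hjs, hjmax⟩ := s.exists_max_image (fun k => dvP (v k)) hsne
  have hcj : c j ≠ 0 := by simpa [hs] using hjs
  set u : Fin N → Rp := fun jj => ∑ k, C (c k) * v k jj with hu
  have hinj : Function.Injective ⇑φp := IsFractionRing.injective Rp Fp
  -- coeff 0 of u vanishes
  have hcoeff0 : ∀ jj, (u jj).coeff 0 = 0 := by
    intro jj
    have := congrFun hc0 jj
    simp only [Finset.sum_apply, Pi.smul_apply, smul_eq_mul, Pi.zero_apply] at this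
    rw [hu]
    rw [Polynomial.finset_sum_coeff]
    simpa [Polynomial.coeff_C_mul] using this
  -- u mapped to Fp is the corresponding combination
  have hmapu : ⇑φp ∘ u = ∑ k, φp (C (c k)) • (⇑φp ∘ v k) := by
    funext jj
    simp only [Function.comp_apply, hu, map_sum, _root_.map_mul, Finset.sum_apply,
      Pi.smul_apply, smul_eq_mul]
  -- u is nonzero somewhere
  have hnz : ∃ jj, u jj ≠ 0 := by
    by_contra hno
    push_neg at hno
    have hzero : ∑ k, φp (C (c k)) • (⇑φp ∘ v k) = 0 := by
      rw [← hmapu]; funext jj; simp [hno jj]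
    have := Fintype.linearIndependent_iff.1 hind _ hzero j
    rw [map_eq_zero_iff φp hinj] at this
    exact hcj (by simpa using this)
  -- divide by X
  have hdvd : ∀ jj, X ∣ u jj := fun jj => Polynomial.X_dvd_iff.2 (hcoeff0 jj)
  set y : Fin N → Rp := fun jj => (hdvd jj).choose with hy
  have hXy : ∀ jj, u jj = X * y jj := fun jj => (hdvd jj).choose_spec
  have hXy' : (X : Rp) • y = u := by funext jj; simp [smul_eq_mul, (hXy jj).symm]
  -- kernel of u
  have husum : u = ∑ k, C (c k) • v k := by
    funext jj; simp [hu, Finset.sum_apply, smul_eq_mul]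
  have hkeru : P.mulVec u = 0 := by
    rw [husum]
    have : P.mulVec (∑ k, C (c k) • v k) = ∑ k, C (c k) • P.mulVec (v k) := by
      rw [show P.mulVec (∑ k, C (c k) • v k) = P.mulVecLin (∑ k, C (c k) • v k) from rfl]
      rw [map_sum]
      simp [Matrix.mulVecLin_apply]
    rw [this]
    simp [hker]
  have hkery : P.mulVec y = 0 := by
    have h1 : (X : Rp) • P.mulVec y = 0 := by
      rw [← Matrix.mulVec_smul, hXy', hkeru]
    funext jj
    have := congrFun h1 jj
    simp only [Pi.smul_apply, smul_eq_mul, Pi.zero_apply] at this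
    rcases mul_eq_zero.1 this with h | h
    · exact absurd h Polynomial.X_ne_zero
    · exact h
  set w : Fin p → Fin N → Rp := Function.update v j y with hw
  have hwker : ∀ k, P.mulVec (w k) = 0 := by
    intro k
    by_cases hkj : k = j
    · subst hkj; simp [hw, Function.update_self, hkery]
    · simp [hw, Function.update_of_ne hkj, hker k]
  -- independence of new family
  have hwind : LinearIndependent Fp (fun k => ⇑φp ∘ w k) := by
    rw [Fintype.linearIndependent_iff]
    intro g hg
    set a : Fp := φp X with ha
    have ha0 : a ≠ 0 := by
      rw [ha, ne_eq, map_eq_zero_iff φp hinj]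
      exact Polynomial.X_ne_zero
    set b : Fin p → Fp := fun k => φp (C (c k)) with hb
    set V : Fin p → Fin N → Fp := fun k => ⇑φp ∘ v k with hV
    set W : Fin p → Fin N → Fp := fun k => ⇑φp ∘ w k with hW
    have hWV : ∀ k, k ≠ j → W k = V k := by
      intro k hk; simp [hW, hV, hw, Function.update_of_ne hk]
    have haWj : a • W j = ∑ k, b k • V k := by
      have h1 : W j = ⇑φp ∘ y := by simp [hW, hw, Function.update_self]
      have h2 : a • (⇑φp ∘ y) = ⇑φp ∘ u := by
        funext jj
        show φp X * φp (y jj) = φp (u jj)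
        rw [← _root_.map_mul, ← hXy jj]
      rw [h1, h2, hmapu]
    set h : Fin p → Fp := fun k => if k = j then g j * b j else a * g k + g j * b k with hh
    have hsum : ∑ k, h k • V k = 0 := by
      have e1 : ∑ k, h k • V k
          = (g j * b j) • V j + ∑ k ∈ Finset.univ.erase j, (a * g k + g j * b k) • V k := by
        rw [← Finset.add_sum_erase _ _ (Finset.mem_univ j)]
        congr 1
        · simp [hh]
        · apply Finset.sum_congr rfl
          intro k hk
          have : k ≠ j := Finset.ne_of_mem_erase hk
          simp [hh, this]
      have e2 : ∑ k ∈ Finset.univ.erase j, (a * g k + g j * b k) • V k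
          = ∑ k ∈ Finset.univ.erase j, (a * g k) • V k
            + ∑ k ∈ Finset.univ.erase j, (g j * b k) • V k := by
        rw [← Finset.sum_add_distrib]
        apply Finset.sum_congr rfl
        intro k _
        rw [add_smul]
      have e3 : (g j * b j) • V j + ∑ k ∈ Finset.univ.erase j, (g j * b k) • V k
          = g j • (a • W j) := by
        rw [haWj, Finset.smul_sum]
        rw [← Finset.add_sum_erase _ (fun k => g j • (b k • V k)) (Finset.mem_univ j)]
        congr 1
        · rw [mul_smul]
        · apply Finset.sum_congr rfl
          intro k _
          rw [mul_smul]
      have e4 : ∑ k ∈ Finset.univ.erase j, (a * g k) • V k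
          = ∑ k ∈ Finset.univ.erase j, (a * g k) • W k := by
        apply Finset.sum_congr rfl
        intro k hk
        rw [hWV k (Finset.ne_of_mem_erase hk)]
      have e5 : g j • (a • W j) + ∑ k ∈ Finset.univ.erase j, (a * g k) • W k
          = a • ∑ k, g k • W k := by
        rw [Finset.smul_sum]
        rw [← Finset.add_sum_erase _ (fun k => a • (g k • W k)) (Finset.mem_univ j)]
        congr 1
        · rw [smul_smul, smul_smul, mul_comm]
        · apply Finset.sum_congr rfl
          intro k _
          rw [mul_smul]
      calc ∑ k, h k • V k
          = (g j * b j) • V j + (∑ k ∈ Finset.univ.erase j, (a * g k) • V k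
            + ∑ k ∈ Finset.univ.erase j, (g j * b k) • V k) := by rw [e1, e2]
        _ = ((g j * b j) • V j + ∑ k ∈ Finset.univ.erase j, (g j * b k) • V k)
            + ∑ k ∈ Finset.univ.erase j, (a * g k) • V k := by abel
        _ = g j • (a • W j) + ∑ k ∈ Finset.univ.erase j, (a * g k) • W k := by
            rw [e3, e4]
        _ = a • ∑ k, g k • W k := e5
        _ = 0 := by rw [hg, smul_zero]
    have hh0 := Fintype.linearIndependent_iff.1 hind h hsum
    have hgj : g j = 0 := by
      have := hh0 j
      simp only [hh, if_pos rfl] at this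
      rcases mul_eq_zero.1 this with h' | h'
      · exact h'
      · exfalso
        rw [hb, map_eq_zero_iff φp hinj] at h'
        exact hcj (by simpa using h')
    intro i
    by_cases hij : i = j
    · rw [hij]; exact hgj
    · have := hh0 i
      simp only [hh, if_neg hij, hgj, zero_mul, add_zero] at this
      rcases mul_eq_zero.1 this with h' | h'
      · exact absurd h' ha0
      · exact h'
  -- degree decrease
  refine ⟨w, hwker, hwind, ?_⟩
  have hdvu : dvP u ≤ dvP (v j) := by
    apply Finset.sup_le
    intro jj _
    rw [hu]
    apply Polynomial.natDegree_sum_le_of_forall_le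
    intro k _
    by_cases hck : c k = 0
    · simp [hck]
    · refine le_trans (Polynomial.natDegree_C_mul_le _ _) ?_
      have hks : k ∈ s := by simp [hs, hck]
      exact le_trans (Finset.le_sup (f := fun jj => (v k jj).natDegree)
        (Finset.mem_univ jj)) (hjmax k hks)
  obtain ⟨jj0, hjj0⟩ := hnz
  have hu1 : 1 ≤ dvP u := by
    have h1 : 1 ≤ (u jj0).natDegree := by
      by_contra hlt
      push_neg at hlt
      have h0 : (u jj0).natDegree = 0 := by omega
      have h2 := Polynomial.eq_C_of_natDegree_eq_zero h0
      rw [hcoeff0 jj0, map_zero] at h2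
      exact hjj0 h2
    exact le_trans h1 (Finset.le_sup (f := fun jj => (u jj).natDegree) (Finset.mem_univ jj0))
  have hdvy : dvP y ≤ dvP u - 1 := by
    apply Finset.sup_le
    intro jj _
    by_cases hyj : y jj = 0
    · rw [hyj]
      simp only [Polynomial.natDegree_zero]
      omega
    · have hdeg : (u jj).natDegree = 1 + (y jj).natDegree := by
        rw [hXy jj, Polynomial.natDegree_mul Polynomial.X_ne_zero hyj, Polynomial.natDegree_X]
      have h2 : (u jj).natDegree ≤ dvP u :=
        Finset.le_sup (f := fun jj => (u jj).natDegree) (Finset.mem_univ jj)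
      omega
  have e_new : ∑ k, dvP (w k) = dvP y + ∑ k ∈ Finset.univ \ {j}, dvP (v k) := by
    have hfun : (fun k => dvP (w k)) = Function.update (fun k => dvP (v k)) j (dvP y) := by
      funext k
      by_cases hkj : k = j
      · subst hkj; simp [hw]
      · simp [hw, Function.update_of_ne hkj]
    calc ∑ k, dvP (w k) = ∑ k, Function.update (fun k => dvP (v k)) j (dvP y) k := by
          rw [hfun]
      _ = dvP y + ∑ k ∈ Finset.univ \ {j}, dvP (v k) :=
          Finset.sum_update_of_mem (Finset.mem_univ j) _ _
  have e_old : ∑ k, dvP (v k) = dvP (v j) + ∑ k ∈ Finset.univ \ {j}, dvP (v k) := by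
    have h3 := Finset.sum_update_of_mem (Finset.mem_univ j) (fun k => dvP (v k)) (dvP (v j))
    simpa [Function.update_eq_self] using h3
  omega

end Fixup



open Matrix Polynomial Module Submodule

noncomputable section Spec2

lemma fix_rec {N p : ℕ} (P : Matrix (Fin N) (Fin N) Rp) :
    ∀ (m : ℕ) (v : Fin p → Fin N → Rp), (∑ k, dvP (v k) ≤ m) →
      (∀ k, P.mulVec (v k) = 0) → LinearIndependent Fp (fun k => ⇑φp ∘ v k) →
      ∃ w : Fin p → Fin N → Rp, (∀ k, P.mulVec (w k) = 0) ∧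
        LinearIndependent ℂ (fun k j => ((w k j).coeff 0)) := by
  intro m
  induction m with
  | zero =>
    intro v hm hker hind
    by_cases hdep : LinearIndependent ℂ (fun k j => ((v k j).coeff 0))
    · exact ⟨v, hker, hdep⟩
    · obtain ⟨w, -, -, hlt⟩ := fixstep P v hker hind hdep
      omega
  | succ m ih =>
    intro v hm hker hind
    by_cases hdep : LinearIndependent ℂ (fun k j => ((v k j).coeff 0))
    · exact ⟨v, hker, hdep⟩
    · obtain ⟨w, hwker, hwind, hlt⟩ := fixstep P v hker hind hdep
      exact ih w (by omega) hwker hwind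

lemma exists_poly_kernel_vectors {N p : ℕ} (P : Matrix (Fin N) (Fin N) Rp)
    (hp : p ≤ Module.finrank Fp (LinearMap.ker (P.map ⇑φp).mulVecLin)) :
    ∃ v : Fin p → Fin N → Rp, (∀ k, P.mulVec (v k) = 0) ∧
      LinearIndependent ℂ (fun k j => ((v k j).coeff 0)) := by
  classical
  set Kr := LinearMap.ker (P.map ⇑φp).mulVecLin with hKr
  have hinj : Function.Injective ⇑φp := IsFractionRing.injective Rp Fp
  let b : Basis (Fin (Module.finrank Fp Kr)) Fp Kr := Module.finBasis Fp Kr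
  set w : Fin p → Fin N → Fp := fun k => ((b (Fin.castLE hp k) : Kr) : Fin N → Fp) with hwdef
  have hwind : LinearIndependent Fp w := by
    have h1 : LinearIndependent Fp (fun i => ((b i : Kr) : Fin N → Fp)) :=
      b.linearIndependent.map' Kr.subtype (Submodule.ker_subtype Kr)
    exact h1.comp _ (Fin.castLE_injective hp)
  have hwker : ∀ k, (P.map ⇑φp).mulVec (w k) = 0 := by
    intro k
    have h2 : (P.map ⇑φp).mulVecLin (w k) = 0 := (b (Fin.castLE hp k)).2
    simpa [Matrix.mulVecLin_apply] using h2
  -- clear denominators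
  have hden : ∀ k, ∃ (d : Rp) (vk : Fin N → Rp), d ≠ 0 ∧ ∀ j, φp (vk j) = φp d * w k j := by
    intro k
    obtain ⟨dk, hdk⟩ :=
      IsLocalization.exist_integer_multiples_of_finite (nonZeroDivisors Rp) (w k)
    choose vk hvk using fun j => hdk j
    refine ⟨(dk : Rp), vk, nonZeroDivisors.ne_zero dk.2, fun j => ?_⟩
    rw [hvk j, Algebra.smul_def]
  choose d vv hd0 hvv using hden
  have hφv : ∀ k, ⇑φp ∘ vv k = φp (d k) • w k := by
    intro k; funext j
    simp [hvv k j, Algebra.smul_def]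
  have hvind : LinearIndependent Fp (fun k => ⇑φp ∘ vv k) := by
    have hu : ∀ k, φp (d k) ≠ 0 := fun k => fun h => hd0 k (hinj (by simpa using h))
    have := hwind.units_smul (fun k => Units.mk0 (φp (d k)) (hu k))
    convert this using 1
    funext k
    rw [hφv k]
    rfl
  have hvker : ∀ k, P.mulVec (vv k) = 0 := by
    intro k
    funext i
    apply hinj
    rw [RingHom.map_mulVec φp P (vv k) i, hφv k]
    rw [Matrix.mulVec_smul, hwker k]
    simp
  exact fix_rec P (∑ k, dvP (vv k)) vv le_rfl hvker hvind

end Spec2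



open Matrix Polynomial Module Submodule

noncomputable section Key

lemma coeff_pencil_zero (a b : ℂ) (q : Rp) :
    ((C a + C b * X) * q).coeff 0 = a * q.coeff 0 := by
  rw [add_mul, Polynomial.coeff_add, Polynomial.coeff_C_mul]
  rw [mul_assoc, Polynomial.mul_coeff_zero]
  simp

lemma coeff_pencil_succ (a b : ℂ) (q : Rp) (d : ℕ) :
    ((C a + C b * X) * q).coeff (d + 1) = a * q.coeff (d + 1) + b * q.coeff d := by
  rw [add_mul, Polynomial.coeff_add, Polynomial.coeff_C_mul]
  rw [mul_assoc, Polynomial.coeff_C_mul, Polynomial.coeff_X_mul]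

lemma key_rank_bound {N : ℕ} (A B : Matrix (Fin N) (Fin N) ℂ) (n : ℕ)
    (hkerAB : ∀ x : Fin N → ℂ, A.mulVec x = 0 → B.mulVec x = 0 → x = 0)
    (hkerABt : ∀ x : Fin N → ℂ, Aᵀ.mulVec x = 0 → Bᵀ.mulVec x = 0 → x = 0)
    (hpt : ∀ t₀ : ℂ, (A + t₀ • B).rank ≤ n) :
    2 * (N - n) ≤ A.rank := by
  classical
  set p := N - n with hpdef
  -- the polynomial pencil
  set P : Matrix (Fin N) (Fin N) Rp := Matrix.of fun i j => C (A i j) + C (B i j) * X with hP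
  have heval : ∀ t₀ : ℂ, P.map ⇑(evalRingHom t₀) = A + t₀ • B := by
    intro t₀
    ext i j
    simp only [hP, Matrix.map_apply, Matrix.of_apply, coe_evalRingHom, Polynomial.eval_add,
      Polynomial.eval_mul, Polynomial.eval_C, Polynomial.eval_X, Matrix.add_apply,
      Matrix.smul_apply, smul_eq_mul]
    ring
  -- rank over the function field is at most n
  have hrankF : (P.map ⇑φp).rank ≤ n := by
    obtain ⟨t₀, ht₀⟩ := exists_eval_rank_ge P
    rw [heval t₀] at ht₀
    exact le_trans ht₀ (hpt t₀)
  -- kernel dimension at least p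
  have hker_dim : p ≤ Module.finrank Fp (LinearMap.ker (P.map ⇑φp).mulVecLin) := by
    have h1 := LinearMap.finrank_range_add_finrank_ker (P.map ⇑φp).mulVecLin
    have h2 : Module.finrank Fp (Fin N → Fp) = N := by simp
    have h3 : (P.map ⇑φp).rank
        = Module.finrank Fp (LinearMap.range (P.map ⇑φp).mulVecLin) := rfl
    omega
  have hker_dim_t : p ≤ Module.finrank Fp (LinearMap.ker (Pᵀ.map ⇑φp).mulVecLin) := by
    have h1 := LinearMap.finrank_range_add_finrank_ker (Pᵀ.map ⇑φp).mulVecLin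
    have h2 : Module.finrank Fp (Fin N → Fp) = N := by simp
    have h3 : (Pᵀ.map ⇑φp).rank
        = Module.finrank Fp (LinearMap.range (Pᵀ.map ⇑φp).mulVecLin) := rfl
    have h4 : (Pᵀ.map ⇑φp).rank = (P.map ⇑φp).rank := by
      rw [Matrix.transpose_map, Matrix.rank_transpose]
    omega
  obtain ⟨v, hvker, hvind⟩ := exists_poly_kernel_vectors P hker_dim
  obtain ⟨y, hyker, hyind⟩ := exists_poly_kernel_vectors Pᵀ hker_dim_t
  -- coefficient relations for v
  have hrel0 : ∀ (k : Fin p), A.mulVec (fun j => (v k j).coeff 0) = 0 := by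
    intro k
    funext i
    have h1 := congrFun (hvker k) i
    have h2 : ((P.mulVec (v k)) i).coeff 0 = 0 := by rw [h1]; rfl
    rw [Matrix.mulVec, dotProduct, Polynomial.finset_sum_coeff] at h2
    simp only [hP, Matrix.of_apply, coeff_pencil_zero] at h2
    simpa [Matrix.mulVec, dotProduct] using h2
  have hrelS : ∀ (d : ℕ) (k : Fin p),
      A.mulVec (fun j => (v k j).coeff (d+1)) + B.mulVec (fun j => (v k j).coeff d) = 0 := by
    intro d k
    funext i
    have h1 := congrFun (hvker k) i
    have h2 : ((P.mulVec (v k)) i).coeff (d+1) = 0 := by rw [h1]; rfl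
    rw [Matrix.mulVec, dotProduct, Polynomial.finset_sum_coeff] at h2
    simp only [hP, Matrix.of_apply, coeff_pencil_succ] at h2
    rw [Finset.sum_add_distrib] at h2
    simpa [Matrix.mulVec, dotProduct] using h2
  have hrel0t : ∀ (k : Fin p), Aᵀ.mulVec (fun j => (y k j).coeff 0) = 0 := by
    intro k
    funext i
    have h1 := congrFun (hyker k) i
    have h2 : ((Pᵀ.mulVec (y k)) i).coeff 0 = 0 := by rw [h1]; rfl
    rw [Matrix.mulVec, dotProduct, Polynomial.finset_sum_coeff] at h2
    simp only [hP, Matrix.transpose_apply, Matrix.of_apply, coeff_pencil_zero] at h2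
    simpa [Matrix.mulVec, dotProduct] using h2
  have hrelSt : ∀ (d : ℕ) (k : Fin p),
      Aᵀ.mulVec (fun j => (y k j).coeff (d+1)) + Bᵀ.mulVec (fun j => (y k j).coeff d) = 0 := by
    intro d k
    funext i
    have h1 := congrFun (hyker k) i
    have h2 : ((Pᵀ.mulVec (y k)) i).coeff (d+1) = 0 := by rw [h1]; rfl
    rw [Matrix.mulVec, dotProduct, Polynomial.finset_sum_coeff] at h2
    simp only [hP, Matrix.transpose_apply, Matrix.of_apply, coeff_pencil_succ] at h2
    rw [Finset.sum_add_distrib] at h2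
    simpa [Matrix.mulVec, dotProduct] using h2
  -- coefficient matrices
  set X0 : Matrix (Fin N) (Fin p) ℂ := Matrix.of fun i k => (v k i).coeff 0 with hX0
  set X1 : Matrix (Fin N) (Fin p) ℂ := Matrix.of fun i k => (v k i).coeff 1 with hX1
  set X2 : Matrix (Fin N) (Fin p) ℂ := Matrix.of fun i k => (v k i).coeff 2 with hX2
  set Y0 : Matrix (Fin N) (Fin p) ℂ := Matrix.of fun i k => (y k i).coeff 0 with hY0
  set Y1 : Matrix (Fin N) (Fin p) ℂ := Matrix.of fun i k => (y k i).coeff 1 with hY1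
  set Y2 : Matrix (Fin N) (Fin p) ℂ := Matrix.of fun i k => (y k i).coeff 2 with hY2
  have hcolv : ∀ (M : Matrix (Fin N) (Fin N) ℂ) (Z : Matrix (Fin N) (Fin p) ℂ) (k : Fin p),
      (M * Z)ᵀ k = M.mulVec (fun j => Z j k) := by
    intro M Z k
    funext i
    simp [Matrix.mul_apply, Matrix.mulVec, dotProduct]
  have hAX0 : A * X0 = 0 := by
    ext i k
    have := congrFun (hrel0 k) i
    simpa [Matrix.mul_apply, Matrix.mulVec, dotProduct, hX0] using this
  have hAX1 : A * X1 + B * X0 = 0 := by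
    ext i k
    have := congrFun (hrelS 0 k) i
    simpa [Matrix.mul_apply, Matrix.mulVec, dotProduct, hX0, hX1] using this
  have hAX2 : A * X2 + B * X1 = 0 := by
    ext i k
    have := congrFun (hrelS 1 k) i
    simpa [Matrix.mul_apply, Matrix.mulVec, dotProduct, hX1, hX2] using this
  have hAY0 : Aᵀ * Y0 = 0 := by
    ext i k
    have := congrFun (hrel0t k) i
    simpa [Matrix.mul_apply, Matrix.mulVec, dotProduct, hY0] using this
  have hAY1 : Aᵀ * Y1 + Bᵀ * Y0 = 0 := by
    ext i k
    have := congrFun (hrelSt 0 k) i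
    simpa [Matrix.mul_apply, Matrix.mulVec, dotProduct, hY0, hY1] using this
  have hAY2 : Aᵀ * Y2 + Bᵀ * Y1 = 0 := by
    ext i k
    have := congrFun (hrelSt 1 k) i
    simpa [Matrix.mul_apply, Matrix.mulVec, dotProduct, hY1, hY2] using this
  have hX0ind : LinearIndependent ℂ X0ᵀ := hvind
  have hY0ind : LinearIndependent ℂ Y0ᵀ := hyind
  -- rank of A * X1 equals p
  have hrankAX1 : (A * X1).rank = p := by
    apply rank_eq_of_cols_linearIndependent
    refine Fintype.linearIndependent_iff.2 ?_
    intro g hg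
    have hgv : (A * X1).mulVec g = 0 := by
      funext i
      have := congrFun hg i
      simpa [Matrix.mulVec, dotProduct, Finset.sum_apply, Matrix.mul_apply,
        mul_comm] using this
    have hBX0g : B.mulVec (X0.mulVec g) = 0 := by
      rw [Matrix.mulVec_mulVec]
      have : B * X0 = -(A * X1) := by rw [eq_neg_iff_add_eq_zero, add_comm]; exact hAX1
      rw [this, Matrix.neg_mulVec, hgv, neg_zero]
    have hAX0g : A.mulVec (X0.mulVec g) = 0 := by
      rw [Matrix.mulVec_mulVec, hAX0, Matrix.zero_mulVec]
    have hX0g : X0.mulVec g = 0 := hkerAB _ hAX0g hBX0g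
    intro k
    refine Fintype.linearIndependent_iff.1 hX0ind g ?_ k
    funext j
    have := congrFun hX0g j
    simpa [Matrix.mulVec, dotProduct, Finset.sum_apply, mul_comm] using this
  have hrankAY1 : (Aᵀ * Y1).rank = p := by
    apply rank_eq_of_cols_linearIndependent
    refine Fintype.linearIndependent_iff.2 ?_
    intro g hg
    have hgv : (Aᵀ * Y1).mulVec g = 0 := by
      funext i
      have := congrFun hg i
      simpa [Matrix.mulVec, dotProduct, Finset.sum_apply, Matrix.mul_apply,
        mul_comm] using this
    have hBY0g : Bᵀ.mulVec (Y0.mulVec g) = 0 := by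
      rw [Matrix.mulVec_mulVec]
      have : Bᵀ * Y0 = -(Aᵀ * Y1) := by rw [eq_neg_iff_add_eq_zero, add_comm]; exact hAY1
      rw [this, Matrix.neg_mulVec, hgv, neg_zero]
    have hAY0g : Aᵀ.mulVec (Y0.mulVec g) = 0 := by
      rw [Matrix.mulVec_mulVec, hAY0, Matrix.zero_mulVec]
    have hY0g : Y0.mulVec g = 0 := hkerABt _ hAY0g hBY0g
    intro k
    refine Fintype.linearIndependent_iff.1 hY0ind g ?_ k
    funext j
    have := congrFun hY0g j
    simpa [Matrix.mulVec, dotProduct, Finset.sum_apply, mul_comm] using this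
  -- the triple product vanishes
  have hzero : Y1ᵀ * (A * X1) = 0 := by
    have e1 : Y1ᵀ * A = -(Y0ᵀ * B) := by
      have h5 : Aᵀ * Y1 = -(Bᵀ * Y0) := by rw [eq_neg_iff_add_eq_zero]; exact hAY1
      calc Y1ᵀ * A = (Aᵀ * Y1)ᵀ := by rw [Matrix.transpose_mul, Matrix.transpose_transpose]
        _ = (-(Bᵀ * Y0))ᵀ := by rw [h5]
        _ = -(Y0ᵀ * B) := by
            rw [Matrix.transpose_neg, Matrix.transpose_mul, Matrix.transpose_transpose]
    have e2 : B * X1 = -(A * X2) := by rw [eq_neg_iff_add_eq_zero, add_comm]; exact hAX2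
    have e3 : Y0ᵀ * A = 0 := by
      calc Y0ᵀ * A = (Aᵀ * Y0)ᵀ := by rw [Matrix.transpose_mul, Matrix.transpose_transpose]
        _ = 0 := by rw [hAY0]; simp
    calc Y1ᵀ * (A * X1) = (Y1ᵀ * A) * X1 := by rw [Matrix.mul_assoc]
      _ = -(Y0ᵀ * B) * X1 := by rw [e1]
      _ = -(Y0ᵀ * (B * X1)) := by rw [Matrix.neg_mul, Matrix.mul_assoc]
      _ = -(Y0ᵀ * -(A * X2)) := by rw [e2]
      _ = Y0ᵀ * (A * X2) := by rw [Matrix.mul_neg, neg_neg]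
      _ = (Y0ᵀ * A) * X2 := by rw [Matrix.mul_assoc]
      _ = 0 := by rw [e3, Matrix.zero_mul]
  -- Frobenius
  have hfrob := frobenius_rank_ineq Y1ᵀ A X1
  rw [hzero, Matrix.rank_zero] at hfrob
  have hY1A : (Y1ᵀ * A).rank = p := by
    rw [← Matrix.rank_transpose, Matrix.transpose_mul, Matrix.transpose_transpose, hrankAY1]
  omega

end Key



open Matrix Polynomial Module Submodule

section Final

/-- trivial common kernel from full rank of stacked matrix -/
lemma common_ker_of_fromRows_rank {N : ℕ} {M1 M2 : Matrix (Fin N) (Fin N) ℂ}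
    (h : (Matrix.fromRows M1 M2).rank = N) :
    ∀ x : Fin N → ℂ, M1.mulVec x = 0 → M2.mulVec x = 0 → x = 0 := by
  intro x h1 h2
  have hrn := LinearMap.finrank_range_add_finrank_ker (Matrix.fromRows M1 M2).mulVecLin
  have hdom : Module.finrank ℂ (Fin N → ℂ) = N := by simp
  have hrk : Module.finrank ℂ (LinearMap.range (Matrix.fromRows M1 M2).mulVecLin) = N := h
  have hker0 : Module.finrank ℂ (LinearMap.ker (Matrix.fromRows M1 M2).mulVecLin) = 0 := by
    omega
  have hbot : LinearMap.ker (Matrix.fromRows M1 M2).mulVecLin = ⊥ :=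
    Submodule.finrank_eq_zero.1 hker0
  have hx : x ∈ LinearMap.ker (Matrix.fromRows M1 M2).mulVecLin := by
    rw [LinearMap.mem_ker, Matrix.mulVecLin_apply, Matrix.fromRows_mulVec, h1, h2]
    funext i
    cases i <;> rfl
  rw [hbot, Submodule.mem_bot] at hx
  exact hx

theorem rank_constraint_on_true_entangled' {N : ℕ} (hN : 1 ≤ N)
    (Γ₁ Γ₂ : Matrix (Fin N) (Fin N) ℂ) (h : TrueEntangled Γ₁ Γ₂)
    (hn : rmax Γ₁ Γ₂ < N) :
    2 * (N - rmax Γ₁ Γ₂) ≤ rmin Γ₁ Γ₂ ∧ rmin Γ₁ Γ₂ ≤ rmax Γ₁ Γ₂ := by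
  obtain ⟨hli, hrow, hcol⟩ := h
  set S := {r : ℕ | ∃ α β : ℂ, ¬(α = 0 ∧ β = 0) ∧ (α • Γ₁ + β • Γ₂).rank = r} with hS
  have hne : S.Nonempty := by
    refine ⟨Γ₁.rank, 1, 0, by norm_num, ?_⟩
    simp
  have hbdd : BddAbove S := by
    refine ⟨N, fun r hr => ?_⟩
    obtain ⟨α, β, -, hrank⟩ := hr
    rw [← hrank]
    have := Matrix.rank_le_card_width (α • Γ₁ + β • Γ₂)
    simpa using this
  have hmax_mem : rmax Γ₁ Γ₂ ∈ S := Nat.sSup_mem hne hbdd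
  have hmin_mem : rmin Γ₁ Γ₂ ∈ S := Nat.sInf_mem hne
  have hminmax : rmin Γ₁ Γ₂ ≤ rmax Γ₁ Γ₂ := Nat.sInf_le hmax_mem
  refine ⟨?_, hminmax⟩
  set n := rmax Γ₁ Γ₂ with hn_def
  have hSle : ∀ r ∈ S, r ≤ n := fun r hr => le_csSup hbdd hr
  -- common kernel facts
  have hker12 : ∀ x : Fin N → ℂ, Γ₁.mulVec x = 0 → Γ₂.mulVec x = 0 → x = 0 :=
    common_ker_of_fromRows_rank hrow
  have hker12t : ∀ x : Fin N → ℂ, Γ₁ᵀ.mulVec x = 0 → Γ₂ᵀ.mulVec x = 0 → x = 0 := by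
    have hrowt : (Matrix.fromRows Γ₁ᵀ Γ₂ᵀ).rank = N := by
      rw [← Matrix.transpose_fromCols, Matrix.rank_transpose]
      exact hcol
    exact common_ker_of_fromRows_rank hrowt
  -- the minimal member
  obtain ⟨α₀, β₀, hαβ, hA⟩ := hmin_mem
  set A : Matrix (Fin N) (Fin N) ℂ := α₀ • Γ₁ + β₀ • Γ₂ with hAdef
  have hmulA : ∀ x, A.mulVec x = α₀ • Γ₁.mulVec x + β₀ • Γ₂.mulVec x := by
    intro x
    rw [hAdef, Matrix.add_mulVec, Matrix.smul_mulVec, Matrix.smul_mulVec]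
  have hmulAt : ∀ x, Aᵀ.mulVec x = α₀ • Γ₁ᵀ.mulVec x + β₀ • Γ₂ᵀ.mulVec x := by
    intro x
    rw [hAdef, Matrix.transpose_add, Matrix.transpose_smul, Matrix.transpose_smul,
      Matrix.add_mulVec, Matrix.smul_mulVec, Matrix.smul_mulVec]
  by_cases hβ : β₀ = 0
  · -- A = α₀ • Γ₁, take B = Γ₂
    have hα : α₀ ≠ 0 := fun hα => hαβ ⟨hα, hβ⟩
    have hkerAB : ∀ x : Fin N → ℂ, A.mulVec x = 0 → Γ₂.mulVec x = 0 → x = 0 := by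
      intro x hx1 hx2
      have h1 : α₀ • Γ₁.mulVec x = 0 := by
        have := hmulA x
        rw [hx1] at this
        rw [hx2] at this
        simpa using this.symm
      exact hker12 x (by simpa [hα] using (smul_eq_zero.1 h1)) hx2
    have hkerABt : ∀ x : Fin N → ℂ, Aᵀ.mulVec x = 0 → Γ₂ᵀ.mulVec x = 0 → x = 0 := by
      intro x hx1 hx2
      have h1 : α₀ • Γ₁ᵀ.mulVec x = 0 := by
        have := hmulAt x
        rw [hx1] at this
        rw [hx2] at this
        simpa using this.symm
      exact hker12t x (by simpa [hα] using (smul_eq_zero.1 h1)) hx2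
    have hpt : ∀ t₀ : ℂ, (A + t₀ • Γ₂).rank ≤ n := by
      intro t₀
      apply hSle
      refine ⟨α₀, β₀ + t₀, fun hc => hα hc.1, ?_⟩
      congr 1
      rw [hAdef]
      module
    have := key_rank_bound A Γ₂ n hkerAB hkerABt hpt
    rw [hA] at this
    exact this
  · -- β₀ ≠ 0, take B = Γ₁
    have hkerAB : ∀ x : Fin N → ℂ, A.mulVec x = 0 → Γ₁.mulVec x = 0 → x = 0 := by
      intro x hx1 hx2
      have h1 : β₀ • Γ₂.mulVec x = 0 := by
        have := hmulA x
        rw [hx1] at this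
        rw [hx2] at this
        simpa using this.symm
      exact hker12 x hx2 (by simpa [hβ] using (smul_eq_zero.1 h1))
    have hkerABt : ∀ x : Fin N → ℂ, Aᵀ.mulVec x = 0 → Γ₁ᵀ.mulVec x = 0 → x = 0 := by
      intro x hx1 hx2
      have h1 : β₀ • Γ₂ᵀ.mulVec x = 0 := by
        have := hmulAt x
        rw [hx1] at this
        rw [hx2] at this
        simpa using this.symm
      exact hker12t x hx2 (by simpa [hβ] using (smul_eq_zero.1 h1))
    have hpt : ∀ t₀ : ℂ, (A + t₀ • Γ₁).rank ≤ n := by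
      intro t₀
      apply hSle
      refine ⟨α₀ + t₀, β₀, fun hc => hβ hc.2, ?_⟩
      congr 1
      rw [hAdef]
      module
    have := key_rank_bound A Γ₁ n hkerAB hkerABt hpt
    rw [hA] at this
    exact this

end Final


theorem rank_constraint_on_true_entangled {N : ℕ} (hN : 1 ≤ N)
    (Γ₁ Γ₂ : Matrix (Fin N) (Fin N) ℂ) (h : TrueEntangled Γ₁ Γ₂)
    (hn : rmax Γ₁ Γ₂ < N) :
    2 * (N - rmax Γ₁ Γ₂) ≤ rmin Γ₁ Γ₂ ∧ rmin Γ₁ Γ₂ ≤ rmax Γ₁ Γ₂ :=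
  rank_constraint_on_true_entangled' hN Γ₁ Γ₂ h hn
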